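/- A degree vector m ∈ ℤ^r with all coordinates nonnegative yields a pure Sylvester-type matrix if and only if there exists a permutation π of {1,…,r} such that m_j ≥ m^π_j for all j = 1,…,r, where m^π_k = (1 + Σ_{j : π(j) ≥ π(k)} l_j)·d_k − l_k. Moreover, the minimum of dim K_0(m) = ∏_k C(m_k + l_k, l_k) over all m yielding a pure Sylvester-type matrix is attained at m^π for some permutation π. -/

import Mathlib

open Finset

/-- `n = l₁ + ⋯ + l_r`, as an integer. -/
def nDim {r : ℕ} (l : Fin r → ℕ) : ℤ := ∑ k, (l k : ℤ)

/-- The defect vector: `δ_k = l_k − ⌈l_k / d_k⌉`. -/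
def defect {r : ℕ} (l d : Fin r → ℕ) (k : Fin r) : ℤ :=
  (l k : ℤ) - ⌈(l k : ℚ) / (d k : ℚ)⌉

/-- `P_k(m) = {p ∈ ℤ : m_k/d_k < p ≤ (m_k + l_k)/d_k}`. -/
def Pset {r : ℕ} (l d : Fin r → ℕ) (m : Fin r → ℤ) (k : Fin r) : Set ℤ :=
  {p : ℤ | (m k : ℚ) / (d k : ℚ) < (p : ℚ) ∧
    (p : ℚ) ≤ ((m k : ℚ) + (l k : ℚ)) / (d k : ℚ)}

/-- The `(p,J)`-summand of `m` is nonzero: `m_k − p d_k ≤ −l_k − 1` for `k ∈ J`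
and `m_k − p d_k ≥ 0` for `k ∉ J`. -/
def SummandNonzero {r : ℕ} (l d : Fin r → ℕ) (m : Fin r → ℤ) (p : ℤ)
    (J : Finset (Fin r)) : Prop :=
  (∀ k ∈ J, m k - p * d k ≤ -(l k : ℤ) - 1) ∧ ∀ k ∉ J, 0 ≤ m k - p * d k

/-- `K_ν(m) = 0`: every `(p,J)`-summand with `p ∈ {0,…,n+1}` and
`p − Σ_{k∈J} l_k = ν` is zero. -/
def Kvanish {r : ℕ} (l d : Fin r → ℕ) (m : Fin r → ℤ) (ν : ℤ) : Prop :=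
  ∀ p : ℤ, 0 ≤ p → p ≤ nDim l + 1 →
    ∀ J : Finset (Fin r), p - ∑ k ∈ J, (l k : ℤ) = ν → ¬ SummandNonzero l d m p J

/-- `m` is determinantal iff `K_{-1}(m) = 0` and `K_2(m) = 0`. -/
def Determinantal {r : ℕ} (l d : Fin r → ℕ) (m : Fin r → ℤ) : Prop :=
  Kvanish l d m (-1) ∧ Kvanish l d m 2

open scoped Classical in
/-- The dimension of the `(p,J)`-summand of `m`. -/
noncomputable def dimSummand {r : ℕ} (l d : Fin r → ℕ) (m : Fin r → ℤ) (p : ℤ)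
    (J : Finset (Fin r)) : ℕ :=
  if SummandNonzero l d m p J then
    (∏ k ∈ J, (p * d k - m k - 1).toNat.choose (l k)) *
      ∏ k ∈ Jᶜ, (m k - p * d k + l k).toNat.choose (l k)
  else 0

open scoped Classical in
/-- `dim K_ν(m)`. -/
noncomputable def dimK {r : ℕ} (l d : Fin r → ℕ) (m : Fin r → ℤ) (ν : ℤ) : ℕ :=
  ∑ p ∈ Finset.range ((∑ k, l k) + 2),
    ((∑ k, l k) + 1).choose p *
      ∑ J ∈ Finset.univ.filter
          (fun J : Finset (Fin r) => (p : ℤ) - ∑ k ∈ J, (l k : ℤ) = ν),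
        dimSummand l d m (p : ℤ) J

/-- `m′`: agrees with `m` except `m′_k = m_k + d_k − [m_k]_k − 1`. -/
def mprime {r : ℕ} (d : Fin r → ℕ) (m : Fin r → ℤ) (k : Fin r) : Fin r → ℤ :=
  Function.update m k (m k + d k - m k % (d k : ℤ) - 1)

/-- `m″`: agrees with `m` except `m″_k = m_k − [m_k + l_k]_k`. -/
def msecond {r : ℕ} (l d : Fin r → ℕ) (m : Fin r → ℤ) (k : Fin r) : Fin r → ℤ :=
  Function.update m k (m k - (m k + l k) % (d k : ℤ))

/-- The critical degree vector `ρ_k = (n+1) d_k − l_k − 1`. -/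
def critical {r : ℕ} (l d : Fin r → ℕ) (k : Fin r) : ℤ :=
  (nDim l + 1) * d k - l k - 1

/-- `m` yields a pure Sylvester-type matrix. -/
def PureSylvester {r : ℕ} (l d : Fin r → ℕ) (m : Fin r → ℤ) : Prop :=
  (∀ k, 0 ≤ m k) ∧ (∀ k, (d k : ℤ) ≤ m k) ∧ Kvanish l d m (-1) ∧
  ∀ ν : ℤ, (ν = 0 ∨ ν = 1) →
    ∀ p : ℤ, 0 ≤ p → p ≤ nDim l + 1 → ∀ J : Finset (Fin r), J ≠ ∅ →
      p - ∑ k ∈ J, (l k : ℤ) = ν → ¬ SummandNonzero l d m p J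

/-- `m` yields a pure Bézout-type complex. -/
def PureBezout {r : ℕ} (l d : Fin r → ℕ) (m : Fin r → ℤ) : Prop :=
  Kvanish l d m (-1) ∧
  SummandNonzero l d m 0 ∅ ∧
  (∀ p : ℤ, 0 ≤ p → p ≤ nDim l + 1 → ∀ J : Finset (Fin r), J ≠ ∅ →
      p - ∑ k ∈ J, (l k : ℤ) = 0 → ¬ SummandNonzero l d m p J) ∧
  SummandNonzero l d m (nDim l + 1) Finset.univ ∧
  (∀ p : ℤ, 0 ≤ p → p ≤ nDim l + 1 → ∀ J : Finset (Fin r),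
      ¬(p = nDim l + 1 ∧ J = Finset.univ) →
      p - ∑ k ∈ J, (l k : ℤ) = 1 → ¬ SummandNonzero l d m p J)

/-- The Sylvester degree vector `m^π_k = (1 + Σ_{π(j) ≥ π(k)} l_j) d_k − l_k`. -/
def mSyl {r : ℕ} (l d : Fin r → ℕ) (π : Equiv.Perm (Fin r)) (k : Fin r) : ℤ :=
  (1 + ∑ j ∈ Finset.univ.filter (fun j => π k ≤ π j), (l j : ℤ)) * d k - l k

/-- The Bézout degree vector `m^π_k = −l_k + d_k Σ_{π(j) ≥ π(k)} l_j`. -/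
def mBez {r : ℕ} (l d : Fin r → ℕ) (π : Equiv.Perm (Fin r)) (k : Fin r) : ℤ :=
  -(l k : ℤ) + (d k : ℤ) * ∑ j ∈ Finset.univ.filter (fun j => π k ≤ π j), (l j : ℤ)

namespace SylAux

variable {r : ℕ} (l d : Fin r → ℕ) (m : Fin r → ℤ)

def Jset (p : ℤ) : Finset (Fin r) :=
  Finset.univ.filter fun k => m k + l k < p * d k

def Valid (p : ℤ) : Prop := ∀ k, m k + l k < p * d k ∨ p * d k ≤ m k

variable {l d m}

lemma mem_Jset {p : ℤ} {k : Fin r} : k ∈ Jset l d m p ↔ m k + l k < p * d k := by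
  simp [Jset]

lemma Jset_mono (hd : ∀ k, 0 < d k) {p q : ℤ} (h : p ≤ q) :
    Jset l d m p ⊆ Jset l d m q := by
  intro k hk
  rw [mem_Jset] at hk ⊢
  have : p * (d k : ℤ) ≤ q * d k :=
    mul_le_mul_of_nonneg_right h (by exact_mod_cast (hd k).le)
  linarith

lemma summand_of_valid {p : ℤ} (h : Valid l d m p) :
    SummandNonzero l d m p (Jset l d m p) := by
  constructor
  · intro k hk
    rw [mem_Jset] at hk
    linarith
  · intro k hk
    rcases h k with h1 | h2
    · exact absurd (mem_Jset.mpr h1) hk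
    · linarith

lemma count_lemma (hr : 0 < r) (hl : ∀ k, 0 < l k) (hd : ∀ k, 0 < d k)
    {u v : ℤ} (huv : u ≤ v)
    (hblock : ∀ x : ℤ, u ≤ x → x < v → ¬ Valid l d m x)
    {t : Finset (Fin r)}
    (ht : ∀ (k : Fin r) (x : ℤ), u ≤ x → x < v →
      m k < x * d k → x * d k ≤ m k + l k → k ∈ t) :
    v - u ≤ ∑ k ∈ t, (l k : ℤ) := by
  classical
  set s : Finset ℤ := Finset.Ico u v with hs
  have hex : ∀ x ∈ s, ∃ k : Fin r, m k < x * d k ∧ x * d k ≤ m k + l k := by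
    intro x hx
    rw [hs, Finset.mem_Ico] at hx
    have h := hblock x hx.1 hx.2
    rw [Valid] at h
    push_neg at h
    obtain ⟨k, h1, h2⟩ := h
    exact ⟨k, h2, h1⟩
  set f : ℤ → Fin r := fun x =>
    if h : ∃ k : Fin r, m k < x * d k ∧ x * d k ≤ m k + l k then h.choose
    else ⟨0, hr⟩ with hf
  have hfP : ∀ x ∈ s, m (f x) < x * d (f x) ∧ x * d (f x) ≤ m (f x) + l (f x) := by
    intro x hx
    have hE := hex x hx
    rw [hf]
    simp only [dif_pos hE]
    exact hE.choose_spec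
  have hmemt : ∀ x ∈ s, f x ∈ t := by
    intro x hx
    have hx' := hx
    rw [hs, Finset.mem_Ico] at hx'
    exact ht (f x) x hx'.1 hx'.2 (hfP x hx).1 (hfP x hx).2
  have hcard : s.card = ∑ k ∈ t, (s.filter fun x => f x = k).card :=
    Finset.card_eq_sum_card_fiberwise hmemt
  have hfib : ∀ k ∈ t, (s.filter fun x => f x = k).card ≤ l k := by
    intro k _
    set F := s.filter fun x => f x = k with hF
    rcases F.eq_empty_or_nonempty with he | hne
    · simp [he, (hl k).le]
    · have hP : ∀ y ∈ F, m k < y * d k ∧ y * d k ≤ m k + l k := by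
        intro y hy
        rw [hF, Finset.mem_filter] at hy
        have h2 := hfP y hy.1
        rw [hy.2] at h2
        exact h2
      set x₀ := F.min' hne with hx₀
      have hx₀m : x₀ ∈ F := F.min'_mem hne
      have hsub : F ⊆ Finset.Ico x₀ (x₀ + l k) := by
        intro y hy
        rw [Finset.mem_Ico]
        refine ⟨F.min'_le y hy, ?_⟩
        by_contra hge
        push_neg at hge
        have h1 := hP y hy
        have h0 := hP x₀ hx₀m
        have hm1 : (x₀ + (l k : ℤ)) * d k ≤ y * d k :=
          mul_le_mul_of_nonneg_right hge (by exact_mod_cast (hd k).le)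
        have he' : (x₀ + (l k : ℤ)) * d k = x₀ * d k + l k * d k := by ring
        have hld : (l k : ℤ) ≤ (l k : ℤ) * d k := by
          nlinarith [(show (1:ℤ) ≤ d k from by exact_mod_cast hd k),
            (show (0:ℤ) ≤ l k from by positivity)]
        linarith [h0.1, h1.2]
      calc F.card ≤ (Finset.Ico x₀ (x₀ + (l k : ℤ))).card := Finset.card_le_card hsub
        _ = l k := by rw [Int.card_Ico]; omega
  have hsc : s.card = (v - u).toNat := Int.card_Ico u v
  have h1 : s.card ≤ ∑ k ∈ t, l k := by
    rw [hcard]; exact Finset.sum_le_sum hfib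
  have h2 : ((v - u).toNat : ℤ) = v - u := Int.toNat_of_nonneg (by linarith)
  calc v - u = ((v-u).toNat : ℤ) := h2.symm
    _ = (s.card : ℤ) := by rw [hsc]
    _ ≤ ((∑ k ∈ t, l k : ℕ) : ℤ) := by exact_mod_cast h1
    _ = ∑ k ∈ t, (l k : ℤ) := by push_cast; ring

lemma exists_valid (hd : ∀ k, 0 < d k) (hm : ∀ k, 0 ≤ m k) (c : ℤ) :
    ∃ p : ℤ, c ≤ p ∧ Valid l d m p := by
  refine ⟨max c 0 + 1 + ∑ k, (m k + l k), ?_, ?_⟩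
  · have h1 : (0:ℤ) ≤ ∑ k, (m k + l k) :=
      Finset.sum_nonneg fun k _ => by have := hm k; positivity
    have := le_max_left c 0
    linarith
  · intro k
    left
    have h1 : m k + l k ≤ ∑ j, (m j + l j) :=
      Finset.single_le_sum (f := fun j => m j + (l j : ℤ))
        (fun j _ => by have := hm j; positivity) (Finset.mem_univ k)
    have hp0 : (0:ℤ) ≤ max c 0 + 1 + ∑ j, (m j + l j) := by
      have := le_max_right c 0
      have h2 : (0:ℤ) ≤ ∑ j, (m j + l j) :=
        Finset.sum_nonneg fun j _ => by have := hm j; positivity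
      linarith
    have hpd : max c 0 + 1 + ∑ j, (m j + l j) ≤ (max c 0 + 1 + ∑ j, (m j + l j)) * d k :=
      le_mul_of_one_le_right hp0 (by exact_mod_cast hd k)
    have := le_max_right c 0
    linarith


lemma hall (hr : 0 < r) (hl : ∀ k, 0 < l k) (hd : ∀ k, 0 < d k)
    (hPS : PureSylvester l d m) (J : Finset (Fin r)) (hJ : J.Nonempty) :
    ∃ k ∈ J, (1 + ∑ j ∈ J, (l j : ℤ)) * d k ≤ m k + l k := by
  classical
  by_contra hcon
  push_neg at hcon
  have hm : ∀ k, 0 ≤ m k := hPS.1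
  set L : ℤ := ∑ j ∈ J, (l j : ℤ) with hLdef
  set p₀ : ℤ := 1 + L with hp₀def
  have hL1 : 1 ≤ L := by
    obtain ⟨k0, hk0⟩ := hJ
    have h1 : (l k0 : ℤ) ≤ L :=
      Finset.single_le_sum (f := fun j => (l j : ℤ)) (fun j _ => by positivity) hk0
    have := hl k0
    have : (1:ℤ) ≤ l k0 := by exact_mod_cast this
    linarith
  have hJp₀ : J ⊆ Jset l d m p₀ := by
    intro k hk
    exact mem_Jset.mpr (hcon k hk)
  -- least valid point ≥ p₀
  have hEV : ∃ p : ℤ, p₀ ≤ p ∧ Valid l d m p := exists_valid hd hm p₀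
  obtain ⟨ps, ⟨hps0, hpsV⟩, hpsMin⟩ :=
    Int.exists_least_of_bdd (P := fun p => p₀ ≤ p ∧ Valid l d m p)
      ⟨p₀, fun z hz => hz.1⟩ hEV
  have hblock1 : ∀ x : ℤ, p₀ ≤ x → x < ps → ¬ Valid l d m x := by
    intro x h1 h2 hV
    exact absurd (hpsMin x ⟨h1, hV⟩) (not_le.mpr h2)
  have hcount1 : ps - p₀ ≤ ∑ k ∈ Jset l d m ps \ Jset l d m p₀, (l k : ℤ) := by
    refine count_lemma hr hl hd hps0 hblock1 ?_
    intro k x hx1 hx2 h1 h2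
    rw [Finset.mem_sdiff]
    constructor
    · rw [mem_Jset]
      rcases hpsV k with hv | hv
      · exact hv
      · exfalso
        have : x * (d k : ℤ) ≤ ps * d k :=
          mul_le_mul_of_nonneg_right hx2.le (by exact_mod_cast (hd k).le)
        linarith
    · rw [mem_Jset]
      push_neg
      have : p₀ * (d k : ℤ) ≤ x * d k :=
        mul_le_mul_of_nonneg_right hx1 (by exact_mod_cast (hd k).le)
      linarith
  have hsub1 : Jset l d m p₀ ⊆ Jset l d m ps := Jset_mono hd hps0
  have hsd1 : ∑ k ∈ Jset l d m ps \ Jset l d m p₀, (l k : ℤ)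
      = ∑ k ∈ Jset l d m ps, (l k : ℤ) - ∑ k ∈ Jset l d m p₀, (l k : ℤ) :=
    Finset.sum_sdiff_eq_sub hsub1
  have hLp₀ : L ≤ ∑ k ∈ Jset l d m p₀, (l k : ℤ) := by
    rw [hLdef]
    exact Finset.sum_le_sum_of_subset_of_nonneg hJp₀ (fun j _ _ => by positivity)
  have hνps : ps ≤ 1 + ∑ k ∈ Jset l d m ps, (l k : ℤ) := by
    rw [hsd1] at hcount1
    linarith
  have hsumU : ∀ q : ℤ, ∑ k ∈ Jset l d m q, (l k : ℤ) ≤ nDim l := by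
    intro q
    exact Finset.sum_le_sum_of_subset_of_nonneg (Finset.subset_univ _)
      (fun j _ _ => by positivity)
  have hps_le : ps ≤ nDim l + 1 := by linarith [hsumU ps]
  have hJps : J ⊆ Jset l d m ps := hJp₀.trans hsub1
  -- Step A: there exists a valid point ≤ nDim+1 above ps with ν ≥ -1
  have stepA : ∃ q : ℤ, ps ≤ q ∧ q ≤ nDim l + 1 ∧ Valid l d m q ∧
      -1 ≤ q - ∑ k ∈ Jset l d m q, (l k : ℤ) := by
    by_contra hno
    push_neg at hno
    obtain ⟨q₀, ⟨hq₀1, hq₀2, hq₀V⟩, hq₀max⟩ :=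
      Int.exists_greatest_of_bdd
        (P := fun q => ps ≤ q ∧ q ≤ nDim l + 1 ∧ Valid l d m q)
        ⟨nDim l + 1, fun z hz => hz.2.1⟩ ⟨ps, le_refl _, hps_le, hpsV⟩
    have hν₀ : q₀ - ∑ k ∈ Jset l d m q₀, (l k : ℤ) < -1 := hno q₀ hq₀1 hq₀2 hq₀V
    have hblock2 : ∀ x : ℤ, q₀ + 1 ≤ x → x < nDim l + 2 → ¬ Valid l d m x := by
      intro x h1 h2 hV
      have hx : x ≤ q₀ := hq₀max x ⟨by linarith, by linarith, hV⟩
      linarith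
    have hcount2 : (nDim l + 2) - (q₀ + 1) ≤
        ∑ k ∈ Finset.univ \ Jset l d m q₀, (l k : ℤ) := by
      refine count_lemma hr hl hd (by linarith) hblock2 ?_
      intro k x hx1 hx2 h1 h2
      rw [Finset.mem_sdiff]
      refine ⟨Finset.mem_univ _, ?_⟩
      rw [mem_Jset]
      push_neg
      have ha : (q₀ + 1) * (d k : ℤ) ≤ x * d k :=
        mul_le_mul_of_nonneg_right hx1 (by exact_mod_cast (hd k).le)
      have hb : (q₀ + 1) * (d k : ℤ) = q₀ * d k + d k := by ring
      have hc : (1:ℤ) ≤ d k := by exact_mod_cast hd k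
      linarith
    have hsd2 : ∑ k ∈ Finset.univ \ Jset l d m q₀, (l k : ℤ)
        = nDim l - ∑ k ∈ Jset l d m q₀, (l k : ℤ) := by
      have := Finset.sum_sdiff_eq_sub (f := fun k => (l k : ℤ))
        (Finset.subset_univ (Jset l d m q₀))
      rw [this]; rfl
    rw [hsd2] at hcount2
    linarith
  obtain ⟨qW, hqW1, hqW2, hqWV, hqWν⟩ := stepA
  -- least such q
  obtain ⟨q, ⟨hq1, hqV, hqν⟩, hqmin⟩ :=
    Int.exists_least_of_bdd
      (P := fun q => ps ≤ q ∧ Valid l d m q ∧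
        -1 ≤ q - ∑ k ∈ Jset l d m q, (l k : ℤ))
      ⟨ps, fun z hz => hz.1⟩ ⟨qW, hqW1, hqWV, hqWν⟩
  have hq_le : q ≤ nDim l + 1 := le_trans (hqmin qW ⟨hqW1, hqWV, hqWν⟩) hqW2
  have hν_up : q - ∑ k ∈ Jset l d m q, (l k : ℤ) ≤ 1 := by
    rcases eq_or_lt_of_le hq1 with heq | hlt
    · rw [← heq]
      linarith [hνps]
    · obtain ⟨q', ⟨hq'1, hq'2, hq'V⟩, hq'max⟩ :=
        Int.exists_greatest_of_bdd
          (P := fun x => ps ≤ x ∧ x ≤ q - 1 ∧ Valid l d m x)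
          ⟨q - 1, fun z hz => hz.2.1⟩ ⟨ps, le_refl _, by linarith, hpsV⟩
      have hq'ν : q' - ∑ k ∈ Jset l d m q', (l k : ℤ) < -1 := by
        by_contra hge
        push_neg at hge
        have := hqmin q' ⟨hq'1, hq'V, hge⟩
        linarith
      have hblock3 : ∀ x : ℤ, q' + 1 ≤ x → x < q → ¬ Valid l d m x := by
        intro x h1 h2 hV
        have : x ≤ q' := hq'max x ⟨by linarith, by linarith, hV⟩
        linarith
      have hcount3 : q - (q' + 1) ≤
          ∑ k ∈ Jset l d m q \ Jset l d m (q' + 1), (l k : ℤ) := by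
        refine count_lemma hr hl hd (by linarith) hblock3 ?_
        intro k x hx1 hx2 h1 h2
        rw [Finset.mem_sdiff]
        constructor
        · rw [mem_Jset]
          rcases hqV k with hv | hv
          · exact hv
          · exfalso
            have : x * (d k : ℤ) ≤ q * d k :=
              mul_le_mul_of_nonneg_right hx2.le (by exact_mod_cast (hd k).le)
            linarith
        · rw [mem_Jset]
          push_neg
          have : (q' + 1) * (d k : ℤ) ≤ x * d k :=
            mul_le_mul_of_nonneg_right hx1 (by exact_mod_cast (hd k).le)
          linarith
      have hsub3 : Jset l d m (q' + 1) ⊆ Jset l d m q := Jset_mono hd (by linarith)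
      have hsd3 : ∑ k ∈ Jset l d m q \ Jset l d m (q' + 1), (l k : ℤ)
          = ∑ k ∈ Jset l d m q, (l k : ℤ) - ∑ k ∈ Jset l d m (q' + 1), (l k : ℤ) :=
        Finset.sum_sdiff_eq_sub hsub3
      have hsub4 : Jset l d m q' ⊆ Jset l d m (q' + 1) := Jset_mono hd (by linarith)
      have hs4 : ∑ k ∈ Jset l d m q', (l k : ℤ) ≤ ∑ k ∈ Jset l d m (q' + 1), (l k : ℤ) :=
        Finset.sum_le_sum_of_subset_of_nonneg hsub4 (fun j _ _ => by positivity)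
      rw [hsd3] at hcount3
      linarith
  -- final contradiction
  have hJq : J ⊆ Jset l d m q := hJps.trans (Jset_mono hd hq1)
  have hJqne : Jset l d m q ≠ ∅ := by
    obtain ⟨k0, hk0⟩ := hJ
    exact Finset.ne_empty_of_mem (hJq hk0)
  have hSnz : SummandNonzero l d m q (Jset l d m q) := summand_of_valid hqV
  have hq0 : 0 ≤ q := by linarith
  have hcases : q - ∑ k ∈ Jset l d m q, (l k : ℤ) = -1 ∨
      q - ∑ k ∈ Jset l d m q, (l k : ℤ) = 0 ∨
      q - ∑ k ∈ Jset l d m q, (l k : ℤ) = 1 := by omega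
  rcases hcases with hc | hc | hc
  · exact hPS.2.2.1 q hq0 hq_le (Jset l d m q) hc hSnz
  · exact hPS.2.2.2 0 (Or.inl rfl) q hq0 hq_le (Jset l d m q) hJqne hc hSnz
  · exact hPS.2.2.2 1 (Or.inr rfl) q hq0 hq_le (Jset l d m q) hJqne hc hSnz


lemma pure_of_ge (hl : ∀ k, 0 < l k) (hd : ∀ k, 0 < d k)
    (hm : ∀ k, 0 ≤ m k) (π : Equiv.Perm (Fin r))
    (hπ : ∀ j, mSyl l d π j ≤ m j) : PureSylvester l d m := by
  classical
  have key : ∀ (p : ℤ) (J : Finset (Fin r)), J.Nonempty →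
      p ≤ (∑ k ∈ J, (l k : ℤ)) + 1 → ¬ SummandNonzero l d m p J := by
    intro p J hJne hple hS
    obtain ⟨k, hkJ, hkmin⟩ := Finset.exists_min_image J (fun i => π i) hJne
    have hsub : J ⊆ Finset.univ.filter fun i => π k ≤ π i := by
      intro j hj
      exact Finset.mem_filter.mpr ⟨Finset.mem_univ _, hkmin j hj⟩
    have hsum : ∑ j ∈ J, (l j : ℤ) ≤
        ∑ j ∈ Finset.univ.filter (fun i => π k ≤ π i), (l j : ℤ) :=
      Finset.sum_le_sum_of_subset_of_nonneg hsub (fun j _ _ => by positivity)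
    have h1 := hS.1 k hkJ
    have h2 := hπ k
    simp only [mSyl] at h2
    set S := ∑ j ∈ Finset.univ.filter (fun i => π k ≤ π i), (l j : ℤ) with hSdef
    have h3 : (1 + S) * (d k : ℤ) < p * d k := by linarith
    have h4 : 1 + S < p :=
      lt_of_mul_lt_mul_right h3 (by exact_mod_cast (hd k).le)
    linarith
  refine ⟨hm, ?_, ?_, ?_⟩
  · intro k
    have h2 := hπ k
    simp only [mSyl] at h2
    set S := ∑ j ∈ Finset.univ.filter (fun i => π k ≤ π i), (l j : ℤ) with hSdef
    have hS1 : (l k : ℤ) ≤ S :=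
      Finset.single_le_sum (f := fun j => (l j : ℤ)) (fun j _ => by positivity)
        (Finset.mem_filter.mpr ⟨Finset.mem_univ _, le_refl _⟩)
    have h0S : (0:ℤ) ≤ S := le_trans (by positivity) hS1
    have hSd : S ≤ S * d k := le_mul_of_one_le_right h0S (by exact_mod_cast hd k)
    have hexp : (1 + S) * (d k : ℤ) = d k + S * d k := by ring
    linarith
  · intro p hp0 hp1 J hJeq hS
    have hJne : J.Nonempty := by
      rcases J.eq_empty_or_nonempty with he | hne
      · exfalso
        rw [he] at hJeq
        simp at hJeq
        omega
      · exact hne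
    exact key p J hJne (by linarith) hS
  · intro ν hν p hp0 hp1 J hJne' hJeq hS
    have hJne : J.Nonempty := Finset.nonempty_iff_ne_empty.mpr hJne'
    have hν1 : ν ≤ 1 := by rcases hν with h | h <;> omega
    exact key p J hJne (by linarith) hS

lemma ge_of_pure (hr : 0 < r) (hl : ∀ k, 0 < l k) (hd : ∀ k, 0 < d k)
    (hPS : PureSylvester l d m) :
    ∃ π : Equiv.Perm (Fin r), ∀ j, mSyl l d π j ≤ m j := by
  classical
  set b : Fin r → ℤ := fun k => (m k + l k) / (d k : ℤ) with hb
  have hbprop : ∀ (c : ℤ) (k : Fin r), c ≤ b k ↔ c * d k ≤ m k + l k := by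
    intro c k
    rw [hb]
    exact Int.le_ediv_iff_mul_le (by exact_mod_cast hd k)
  set σ := Tuple.sort (fun k => -(b k)) with hσ
  refine ⟨σ⁻¹, ?_⟩
  intro j
  set Jf := Finset.univ.filter (fun i => σ⁻¹ j ≤ σ⁻¹ i) with hJf
  have hjJf : j ∈ Jf := by
    rw [hJf]
    exact Finset.mem_filter.mpr ⟨Finset.mem_univ _, le_refl _⟩
  obtain ⟨k, hkJf, hk⟩ := hall hr hl hd hPS Jf ⟨j, hjJf⟩
  have hπjk : σ⁻¹ j ≤ σ⁻¹ k := by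
    rw [hJf] at hkJf
    exact (Finset.mem_filter.mp hkJf).2
  have hmono := Tuple.monotone_sort (fun k => -(b k)) hπjk
  simp only [Function.comp_apply, Equiv.Perm.inv_def, ← hσ, Equiv.apply_symm_apply] at hmono
  have hbk : 1 + ∑ i ∈ Jf, (l i : ℤ) ≤ b k := (hbprop _ k).mpr hk
  have hbj : 1 + ∑ i ∈ Jf, (l i : ℤ) ≤ b j := by
    have : b k ≤ b j := by
      have := neg_le_neg_iff.mp hmono
      exact this
    linarith
  have hfin := (hbprop _ j).mp hbj
  simp only [mSyl, ← hJf]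
  linarith

end SylAux

/-- A nonnegative degree vector `m` yields a pure Sylvester-type matrix iff `m ≥ m^π`
coordinatewise for some permutation `π`; moreover the smallest Sylvester matrix is
attained at some `m^π`. -/
theorem sylvester_characterization (r : ℕ) (hr : 0 < r) (l d : Fin r → ℕ) (hl : ∀ k, 0 < l k) (hd : ∀ k, 0 < d k) :
    (∀ m : Fin r → ℤ, (∀ k, 0 ≤ m k) →
      (PureSylvester l d m ↔ ∃ π : Equiv.Perm (Fin r), ∀ j, mSyl l d π j ≤ m j)) ∧
    ∃ π : Equiv.Perm (Fin r), PureSylvester l d (mSyl l d π) ∧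
      ∀ m : Fin r → ℤ, (∀ k, 0 ≤ m k) → PureSylvester l d m →
        (∏ k, ((mSyl l d π k + (l k : ℤ)).toNat.choose (l k))) ≤
          ∏ k, ((m k + (l k : ℤ)).toNat.choose (l k)) := by
  classical
  have hmain : ∀ m : Fin r → ℤ, (∀ k, 0 ≤ m k) →
      (PureSylvester l d m ↔ ∃ π : Equiv.Perm (Fin r), ∀ j, mSyl l d π j ≤ m j) := by
    intro m hm
    constructor
    · intro hPS
      exact SylAux.ge_of_pure hr hl hd hPS
    · rintro ⟨π, hπ⟩
      exact SylAux.pure_of_ge hl hd hm π hπ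
  refine ⟨hmain, ?_⟩
  have hmSylnn : ∀ (π : Equiv.Perm (Fin r)) (k : Fin r), 0 ≤ mSyl l d π k := by
    intro π k
    simp only [mSyl]
    set S := ∑ j ∈ Finset.univ.filter (fun i => π k ≤ π i), (l j : ℤ) with hSdef
    have hS1 : (l k : ℤ) ≤ S :=
      Finset.single_le_sum (f := fun j => (l j : ℤ)) (fun j _ => by positivity)
        (Finset.mem_filter.mpr ⟨Finset.mem_univ _, le_refl _⟩)
    have h0S : (0:ℤ) ≤ S := le_trans (by positivity) hS1
    have hSd : 1 + S ≤ (1 + S) * d k :=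
      le_mul_of_one_le_right (by linarith) (by exact_mod_cast hd k)
    linarith
  obtain ⟨π₀, -, hπ₀min⟩ := Finset.exists_min_image
    (Finset.univ : Finset (Equiv.Perm (Fin r)))
    (fun π => ∏ k, ((mSyl l d π k + (l k : ℤ)).toNat.choose (l k)))
    ⟨1, Finset.mem_univ 1⟩
  refine ⟨π₀, (hmain _ (hmSylnn π₀)).mpr ⟨π₀, fun j => le_refl _⟩, ?_⟩
  intro m hm hPS
  obtain ⟨π, hπ⟩ := SylAux.ge_of_pure hr hl hd hPS
  have h1 : (∏ k, ((mSyl l d π₀ k + (l k : ℤ)).toNat.choose (l k))) ≤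
      ∏ k, ((mSyl l d π k + (l k : ℤ)).toNat.choose (l k)) :=
    hπ₀min π (Finset.mem_univ π)
  have h2 : (∏ k, ((mSyl l d π k + (l k : ℤ)).toNat.choose (l k))) ≤
      ∏ k, ((m k + (l k : ℤ)).toNat.choose (l k)) := by
    apply Finset.prod_le_prod'
    intro k _
    apply Nat.choose_le_choose
    apply Int.toNat_le_toNat
    linarith [hπ k]
  exact le_trans h1 h2
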